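/- Let φ be an Orlicz function taking only finite values, satisfying the Δ₂-condition at zero, and such that ∑_{n=n₁}^∞ φ(1/n) < ∞ for some n₁ ∈ ℕ. Then for every x ∈ ces_φ: ‖x‖_φ = 1 if and only if ρ_φ(x) = 1. -/

import Mathlib

open scoped ENNReal
open Filter

/-- An Orlicz function: `φ : ℝ → [0,∞]` even, convex, left continuous on `ℝ₊`,
continuous at zero, with `φ 0 = 0` and `φ u → ∞` as `u → ∞`. -/
structure OrliczFunction where
  toFun : ℝ → ℝ≥0∞
  even' : ∀ u : ℝ, toFun (-u) = toFun u
  convex' : ∀ u v t : ℝ, 0 ≤ t → t ≤ 1 →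
    toFun (t * u + (1 - t) * v) ≤ ENNReal.ofReal t * toFun u + ENNReal.ofReal (1 - t) * toFun v
  map_zero' : toFun 0 = 0
  leftContinuous' : ∀ t : ℝ, 0 < t → Tendsto toFun (nhdsWithin t (Set.Iio t)) (nhds (toFun t))
  continuousAtZero' : Tendsto toFun (nhds 0) (nhds 0)
  tendsto_top' : Tendsto toFun atTop (nhds ⊤)

/-- The Cesàro mean `σx(n) = (1/n) ∑_{j=1}^n |x j|` (with `0`-based indexing). -/
noncomputable def cesaroMean (x : ℕ → ℝ) (n : ℕ) : ℝ :=
  (∑ j ∈ Finset.range (n + 1), |x j|) / (n + 1)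

/-- The modular `ρ_φ(x) = ∑_i φ(σx(i))`. -/
noncomputable def rho (φ : OrliczFunction) (x : ℕ → ℝ) : ℝ≥0∞ :=
  ∑' n : ℕ, φ.toFun (cesaroMean x n)

/-- The Cesàro–Orlicz sequence space `ces_φ`. -/
def cesOrlicz (φ : OrliczFunction) : Set (ℕ → ℝ) :=
  {x | ∃ lam : ℝ, 0 < lam ∧ rho φ (fun i => lam * x i) < ⊤}

/-- The Luxemburg norm `‖x‖_φ = inf {λ > 0 : ρ_φ(x/λ) ≤ 1}`. -/
noncomputable def luxNorm (φ : OrliczFunction) (x : ℕ → ℝ) : ℝ :=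
  sInf {lam : ℝ | 0 < lam ∧ rho φ (fun i => x i / lam) ≤ 1}

/-- The subspace `A_φ` of `ces_φ`. -/
def Aphi (φ : OrliczFunction) : Set (ℕ → ℝ) :=
  {x | x ∈ cesOrlicz φ ∧ ∀ k : ℝ, 0 < k → ∃ nk : ℕ,
    ∑' n : ℕ, φ.toFun ((k / ((nk + n + 1 : ℕ) : ℝ)) * ∑ i ∈ Finset.range (nk + n + 1), |x i|) < ⊤}

/-- `∃ n₁, ∑_{n=n₁}^∞ φ(1/n) < ∞`. -/
def TailFinite (φ : OrliczFunction) : Prop :=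
  ∃ n₁ : ℕ, ∑' n : ℕ, φ.toFun (((n₁ + n + 1 : ℕ) : ℝ)⁻¹) < ⊤

/-- The `Δ₂`-condition at zero. -/
def Delta2Zero (φ : OrliczFunction) : Prop :=
  ∃ K : ℝ, 0 < K ∧ ∃ a : ℝ, 0 < a ∧ 0 < φ.toFun a ∧
    ∀ u : ℝ, 0 ≤ u → u ≤ a → φ.toFun (2 * u) ≤ ENNReal.ofReal K * φ.toFun u

/-- `φ` takes only finite values. -/
def FiniteValued (φ : OrliczFunction) : Prop := ∀ u : ℝ, φ.toFun u ≠ ⊤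

/-- if `φ ∈ Δ₂(0)` then for `x ∈ ces_φ`, `‖x‖_φ = 1 ↔ ρ_φ(x) = 1`. -/
-- auxiliary lemmas
lemma OF_mono (φ : OrliczFunction) {u v : ℝ} (hu : 0 ≤ u) (huv : u ≤ v) :
    φ.toFun u ≤ φ.toFun v := by
  rcases eq_or_lt_of_le (hu.trans huv) with h | hv
  · have hu0 : u = 0 := le_antisymm (huv.trans h.symm.le) hu
    rw [hu0, ← h]
  · have ht0 : 0 ≤ u / v := div_nonneg hu hv.le
    have ht1 : u / v ≤ 1 := (div_le_one hv).2 huv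
    have h1 := φ.convex' v 0 (u / v) ht0 ht1
    rw [mul_zero, add_zero, div_mul_cancel₀ _ (ne_of_gt hv)] at h1
    calc φ.toFun u ≤ ENNReal.ofReal (u / v) * φ.toFun v
          + ENNReal.ofReal (1 - u / v) * φ.toFun 0 := h1
      _ = ENNReal.ofReal (u / v) * φ.toFun v := by rw [φ.map_zero', mul_zero, add_zero]
      _ ≤ 1 * φ.toFun v := by gcongr; exact ENNReal.ofReal_le_one.2 ht1
      _ = φ.toFun v := one_mul _

lemma OF_scale_le (φ : OrliczFunction) {t : ℝ} (u : ℝ) (ht0 : 0 ≤ t) (ht1 : t ≤ 1) :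
    φ.toFun (t * u) ≤ ENNReal.ofReal t * φ.toFun u := by
  have h1 := φ.convex' u 0 t ht0 ht1
  rw [mul_zero, add_zero, φ.map_zero', mul_zero, add_zero] at h1
  exact h1

lemma OF_interp (φ : OrliczFunction) {lam : ℝ} (u : ℝ) (h1 : 1 ≤ lam) (h2 : lam ≤ 2) :
    φ.toFun (lam * u) ≤ ENNReal.ofReal (2 - lam) * φ.toFun u
      + ENNReal.ofReal (lam - 1) * φ.toFun (2 * u) := by
  have h := φ.convex' u (2 * u) (2 - lam) (by linarith) (by linarith)
  have he : (2 - lam) * u + (1 - (2 - lam)) * (2 * u) = lam * u := by ring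
  have he2 : (1 : ℝ) - (2 - lam) = lam - 1 := by ring
  rw [he, he2] at h
  exact h

lemma cesaroMean_nonneg (x : ℕ → ℝ) (n : ℕ) : 0 ≤ cesaroMean x n :=
  div_nonneg (Finset.sum_nonneg fun _ _ => abs_nonneg _) (by positivity)

lemma cesaroMean_smul (x : ℕ → ℝ) {μ : ℝ} (hμ : 0 ≤ μ) (n : ℕ) :
    cesaroMean (fun i => μ * x i) n = μ * cesaroMean x n := by
  unfold cesaroMean
  simp only [abs_mul, abs_of_nonneg hμ, ← Finset.mul_sum, mul_div_assoc]

lemma rho_scale_mono (φ : OrliczFunction) (x : ℕ → ℝ) {μ ν : ℝ} (h0 : 0 ≤ μ) (h : μ ≤ ν) :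
    rho φ (fun i => μ * x i) ≤ rho φ (fun i => ν * x i) := by
  apply ENNReal.tsum_le_tsum
  intro n
  rw [cesaroMean_smul x h0 n, cesaroMean_smul x (h0.trans h) n]
  exact OF_mono φ (mul_nonneg h0 (cesaroMean_nonneg x n))
    (mul_le_mul_of_nonneg_right h (cesaroMean_nonneg x n))

set_option maxHeartbeats 1000000 in
lemma rho_double (φ : OrliczFunction) (hfin : FiniteValued φ) (hδ : Delta2Zero φ) {x : ℕ → ℝ}
    (hρ : rho φ x < ⊤) : rho φ (fun i => 2 * x i) < ⊤ := by
  obtain ⟨K, hK, a, ha, hφa, hΔ⟩ := hδ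
  have hterm : Tendsto (fun n => φ.toFun (cesaroMean x n)) atTop (nhds 0) :=
    ENNReal.tendsto_atTop_zero_of_tsum_ne_top hρ.ne
  obtain ⟨N, hN⟩ := eventually_atTop.1 (hterm.eventually_lt_const hφa)
  have hσ : ∀ n, N ≤ n → cesaroMean x n ≤ a := by
    intro n hn
    by_contra hlt
    push_neg at hlt
    exact absurd (OF_mono φ ha.le hlt.le) (not_le.2 (hN n hn))
  have key : (∑ i ∈ Finset.range N, φ.toFun (cesaroMean (fun i => 2 * x i) i))
      + ∑' n, φ.toFun (cesaroMean (fun i => 2 * x i) (n + N)) = rho φ (fun i => 2 * x i) :=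
    Summable.sum_add_tsum_nat_add' (f := fun n => φ.toFun (cesaroMean (fun i => 2 * x i) n))
      (k := N) ENNReal.summable
  rw [← key]
  apply ENNReal.add_lt_top.2
  constructor
  · exact ENNReal.sum_lt_top.2 fun i _ => (hfin _).lt_top
  · have htail : ∑' n, φ.toFun (cesaroMean (fun i => 2 * x i) (n + N))
        ≤ ENNReal.ofReal K * ∑' n, φ.toFun (cesaroMean x (n + N)) := by
      rw [← ENNReal.tsum_mul_left]
      apply ENNReal.tsum_le_tsum
      intro n
      rw [cesaroMean_smul x (by norm_num) (n + N)]
      exact hΔ _ (cesaroMean_nonneg x _) (hσ _ (Nat.le_add_left N n))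
    have hsub : ∑' n, φ.toFun (cesaroMean x (n + N)) ≤ rho φ x := by
      rw [rho, ← Summable.sum_add_tsum_nat_add' (f := fun n => φ.toFun (cesaroMean x n)) (k := N)
        ENNReal.summable]
      exact le_add_self
    calc ∑' n, φ.toFun (cesaroMean (fun i => 2 * x i) (n + N))
        ≤ ENNReal.ofReal K * rho φ x := htail.trans (by gcongr)
      _ < ⊤ := ENNReal.mul_lt_top ENNReal.ofReal_lt_top hρ

lemma rho_finite_all (φ : OrliczFunction) (hfin : FiniteValued φ) (hδ : Delta2Zero φ)
    {x : ℕ → ℝ} (hx : x ∈ cesOrlicz φ) {μ : ℝ} (hμ0 : 0 ≤ μ) :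
    rho φ (fun i => μ * x i) < ⊤ := by
  obtain ⟨lam, hlam, h⟩ := hx
  have hk : ∀ k : ℕ, rho φ (fun i => 2 ^ k * lam * x i) < ⊤ := by
    intro k
    induction k with
    | zero => simpa using h
    | succ k ih =>
      have h2 := rho_double φ hfin hδ ih
      have heq : (fun i => 2 * (2 ^ k * lam * x i)) = fun i => 2 ^ (k + 1) * lam * x i := by
        funext i; ring
      rwa [heq] at h2
  obtain ⟨k, hk'⟩ := pow_unbounded_of_one_lt (μ / lam) (one_lt_two (α := ℝ))
  have hle : μ ≤ 2 ^ k * lam := by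
    rw [div_lt_iff₀ hlam] at hk'
    linarith
  exact lt_of_le_of_lt (rho_scale_mono φ x hμ0 hle) (hk k)

theorem stmt_11_aux (φ : OrliczFunction) (hfin : FiniteValued φ) (hδ : Delta2Zero φ)
    (x : ℕ → ℝ) (hx : x ∈ cesOrlicz φ) :
    luxNorm φ x = 1 ↔ rho φ x = 1 := by
  set S := {lam : ℝ | 0 < lam ∧ rho φ (fun i => x i / lam) ≤ 1} with hSdef
  have hlux : luxNorm φ x = sInf S := rfl
  have hdiv : ∀ lam : ℝ, (fun i => x i / lam) = fun i => lam⁻¹ * x i := by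
    intro lam; funext i; rw [div_eq_inv_mul]
  have hx1 : (fun i => (1 : ℝ) * x i) = x := by funext i; rw [one_mul]
  have hM : rho φ (fun i => 2 * x i) < ⊤ := rho_finite_all φ hfin hδ hx (by norm_num)
  set M := rho φ (fun i => 2 * x i) with hMdef
  have hcfin : rho φ x < ⊤ := by
    rw [← hx1]
    exact lt_of_le_of_lt (rho_scale_mono φ x one_pos.le one_le_two) hM
  have hSbdd : BddBelow S := ⟨0, fun y hy => hy.1.le⟩
  -- key convexity bound for scaling up
  have hbound : ∀ lam : ℝ, 1 ≤ lam → lam ≤ 2 →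
      rho φ (fun i => lam * x i) ≤
        ENNReal.ofReal (2 - lam) * rho φ x + ENNReal.ofReal (lam - 1) * M := by
    intro lam h1 h2
    rw [hMdef, rho, rho, rho, ← ENNReal.tsum_mul_left, ← ENNReal.tsum_mul_left,
      ← ENNReal.tsum_add]
    apply ENNReal.tsum_le_tsum
    intro n
    rw [cesaroMean_smul x (by linarith) n, cesaroMean_smul x (by norm_num) n]
    exact OF_interp φ (cesaroMean x n) h1 h2
  constructor
  · -- norm = 1 → modular = 1
    intro hnorm
    rw [hlux] at hnorm
    have hSne : S.Nonempty := by
      by_contra h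
      rw [Set.not_nonempty_iff_eq_empty] at h
      rw [h, Real.sInf_empty] at hnorm
      norm_num at hnorm
    have ha' : ∀ lam : ℝ, 1 < lam → rho φ (fun i => lam⁻¹ * x i) ≤ 1 := by
      intro lam hlam
      have hlt : sInf S < lam := by rw [hnorm]; exact hlam
      obtain ⟨μ, hμS, hμlt⟩ := exists_lt_of_csInf_lt hSne hlt
      have hμ1 := hμS.2
      rw [hdiv μ] at hμ1
      refine le_trans ?_ hμ1
      apply rho_scale_mono φ x (by positivity)
      exact inv_anti₀ hμS.1 hμlt.le
    -- upper bound: rho x ≤ 1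
    have hub : rho φ x ≤ 1 := by
      apply ENNReal.le_of_forall_pos_le_add
      intro ε hε _
      set Mr := M.toReal with hMr
      have hMr0 : 0 ≤ Mr := ENNReal.toReal_nonneg
      set δ : ℝ := min 1 ((ε : ℝ) / (Mr + 1)) with hδdef
      have hδ0 : 0 < δ := lt_min one_pos (by positivity)
      have hδ1 : δ ≤ 1 := min_le_left _ _
      have hkey : rho φ x ≤ ENNReal.ofReal (2 - (1 + δ)) * rho φ (fun i => (1 + δ)⁻¹ * x i)
          + ENNReal.ofReal ((1 + δ) - 1) * M := by
        rw [hMdef, rho, rho, rho, ← ENNReal.tsum_mul_left, ← ENNReal.tsum_mul_left,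
          ← ENNReal.tsum_add]
        apply ENNReal.tsum_le_tsum
        intro n
        rw [cesaroMean_smul x (inv_nonneg.2 (by linarith)) n,
          cesaroMean_smul x (by norm_num) n]
        have hinterp := OF_interp φ ((1 + δ)⁻¹ * cesaroMean x n)
          (by linarith : (1:ℝ) ≤ 1 + δ) (by linarith : (1:ℝ) + δ ≤ 2)
        rw [← mul_assoc, mul_inv_cancel₀ (ne_of_gt (by linarith : (0:ℝ) < 1 + δ)),
          one_mul] at hinterp
        refine hinterp.trans ?_
        gcongr
        have hσ0 := cesaroMean_nonneg x n
        have hi0 : (0:ℝ) ≤ (1 + δ)⁻¹ := inv_nonneg.2 (by linarith)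
        apply OF_mono φ (mul_nonneg (by norm_num) (mul_nonneg hi0 hσ0))
        have hinv : (1 + δ)⁻¹ ≤ 1 := inv_le_one_of_one_le₀ (by linarith)
        nlinarith
      have e1 : 2 - (1 + δ) = 1 - δ := by ring
      have e2 : 1 + δ - 1 = δ := by ring
      rw [e1, e2] at hkey
      have h2 : rho φ x ≤ ENNReal.ofReal (1 - δ) * 1 + ENNReal.ofReal δ * M := by
        refine hkey.trans ?_
        gcongr
        exact ha' (1 + δ) (by linarith)
      refine h2.trans ?_
      have hMeq : M = ENNReal.ofReal Mr := (ENNReal.ofReal_toReal hM.ne).symm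
      rw [hMeq, mul_one, ← ENNReal.ofReal_mul hδ0.le]
      have hδM : δ * Mr ≤ (ε : ℝ) := by
        have h1 : δ ≤ (ε : ℝ) / (Mr + 1) := min_le_right _ _
        have h2' : δ * (Mr + 1) ≤ (ε : ℝ) := by
          rw [← le_div_iff₀ (by linarith)]
          exact h1
        nlinarith
      calc ENNReal.ofReal (1 - δ) + ENNReal.ofReal (δ * Mr)
          ≤ ENNReal.ofReal 1 + ENNReal.ofReal (ε : ℝ) :=
            add_le_add (ENNReal.ofReal_le_ofReal (by linarith))
              (ENNReal.ofReal_le_ofReal hδM)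
        _ = 1 + (ε : ℝ≥0∞) := by
            rw [ENNReal.ofReal_one, ENNReal.ofReal_coe_nnreal]
    -- lower bound: rho x ≥ 1
    have hlb : (1 : ℝ≥0∞) ≤ rho φ x := by
      by_contra hc
      push_neg at hc
      set cr := (rho φ x).toReal with hcr
      have hceq : rho φ x = ENNReal.ofReal cr := (ENNReal.ofReal_toReal hcfin.ne).symm
      have hcr0 : 0 ≤ cr := ENNReal.toReal_nonneg
      have hcr1 : cr < 1 := by
        have := ENNReal.toReal_strict_mono ENNReal.one_ne_top hc
        simpa using this
      set Mr := M.toReal with hMr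
      have hMr0 : 0 ≤ Mr := ENNReal.toReal_nonneg
      have hMeq : M = ENNReal.ofReal Mr := (ENNReal.ofReal_toReal hM.ne).symm
      set δ : ℝ := min 1 ((1 - cr) / (Mr + 1)) with hδdef
      have hδ0 : 0 < δ := lt_min one_pos (div_pos (by linarith) (by linarith))
      have hδ1 : δ ≤ 1 := min_le_left _ _
      have hb2 := hbound (1 + δ) (by linarith) (by linarith)
      have hval : ENNReal.ofReal (2 - (1 + δ)) * rho φ x + ENNReal.ofReal ((1 + δ) - 1) * M
          ≤ 1 := by
        rw [hceq, hMeq, ← ENNReal.ofReal_mul (by linarith), ← ENNReal.ofReal_mul (by linarith),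
          ← ENNReal.ofReal_add (by nlinarith) (by nlinarith), ← ENNReal.ofReal_one]
        apply ENNReal.ofReal_le_ofReal
        have h1 : δ ≤ (1 - cr) / (Mr + 1) := min_le_right _ _
        have h2' : δ * (Mr + 1) ≤ 1 - cr := by
          rw [← le_div_iff₀ (by linarith)]
          exact h1
        nlinarith
      have hmem : (1 + δ)⁻¹ ∈ S := by
        constructor
        · positivity
        · have heq : (fun i => x i / (1 + δ)⁻¹) = fun i => (1 + δ) * x i := by
            funext i
            rw [div_eq_mul_inv, inv_inv, mul_comm]
          rw [heq]
          exact hb2.trans hval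
      have hle : sInf S ≤ (1 + δ)⁻¹ := csInf_le hSbdd hmem
      rw [hnorm] at hle
      have : (1 + δ)⁻¹ < 1 := by
        rw [inv_lt_one₀ (by linarith)]
        linarith
      linarith
    exact le_antisymm hub hlb
  · -- modular = 1 → norm = 1
    intro hrho
    have h1S : (1 : ℝ) ∈ S := by
      refine ⟨one_pos, ?_⟩
      have heq : (fun i => x i / 1) = x := by funext i; rw [div_one]
      rw [heq, hrho]
    have hlb : ∀ lam ∈ S, (1 : ℝ) ≤ lam := by
      rintro lam ⟨hl0, hl1⟩
      by_contra hlt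
      push_neg at hlt
      have key : rho φ x ≤ ENNReal.ofReal lam * rho φ (fun i => x i / lam) := by
        rw [hdiv lam, rho, rho, ← ENNReal.tsum_mul_left]
        apply ENNReal.tsum_le_tsum
        intro n
        rw [cesaroMean_smul x (by positivity) n]
        have h := OF_scale_le φ (lam⁻¹ * cesaroMean x n) hl0.le hlt.le
        rw [← mul_assoc, mul_inv_cancel₀ hl0.ne', one_mul] at h
        exact h
      have hcon : (1 : ℝ≥0∞) ≤ ENNReal.ofReal lam := by
        calc (1 : ℝ≥0∞) = rho φ x := hrho.symm
          _ ≤ ENNReal.ofReal lam * rho φ (fun i => x i / lam) := key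
          _ ≤ ENNReal.ofReal lam * 1 := by gcongr
          _ = ENNReal.ofReal lam := mul_one _
      exact absurd hcon (not_le.2 (ENNReal.ofReal_lt_one.2 hlt))
    rw [hlux]
    exact le_antisymm (csInf_le hSbdd h1S) (le_csInf ⟨1, h1S⟩ hlb)

/-- as required. -/
theorem stmt_11 (φ : OrliczFunction) (hfin : FiniteValued φ) (hδ : Delta2Zero φ)
    (htail : TailFinite φ) (x : ℕ → ℝ) (hx : x ∈ cesOrlicz φ) :
    luxNorm φ x = 1 ↔ rho φ x = 1 :=
  stmt_11_aux φ hfin hδ x hx
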